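/- Transverse monotonicity of the potential along fibers: for every λ ∈ ℝ with x₀_i + λ b_i ≠ 0 for all i, the function λ ↦ Φ(γ(λ)) is differentiable at λ with derivative Σ_{i=1}^n b_i² / (2 |x₀_i + λ b_i|) > 0; consequently λ ↦ Φ(γ(λ)) is strictly increasing on every open interval on which all components x₀_i + λ b_i are nonzero. -/

import Mathlib

lemma termEq (c x : ℝ) :
    c * Real.sign (Real.sign x * Real.sqrt |x|) * Real.log (abs (Real.sign x * Real.sqrt |x|)) =
      c * Real.sign x * Real.log |x| / 2 := by
  rcases lt_trichotomy x 0 with hx | hx | hx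
  · have hs : Real.sign x = -1 := Real.sign_of_neg hx
    have hsq : 0 < Real.sqrt |x| := Real.sqrt_pos.mpr (abs_pos.mpr hx.ne)
    rw [hs]
    have h1 : Real.sign (-1 * Real.sqrt |x|) = -1 := by
      rw [Real.sign_of_neg]; nlinarith
    have h2 : abs ((-1 : ℝ) * Real.sqrt |x|) = Real.sqrt |x| := by
      rw [abs_mul, abs_neg, abs_one, one_mul, abs_of_pos hsq]
    rw [h1, h2, Real.log_sqrt (abs_nonneg x)]
    ring
  · simp [hx]
  · have hs : Real.sign x = 1 := Real.sign_of_pos hx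
    have hsq : 0 < Real.sqrt |x| := Real.sqrt_pos.mpr (abs_pos.mpr hx.ne')
    rw [hs, one_mul, Real.sign_of_pos hsq, abs_of_pos hsq, Real.log_sqrt (abs_nonneg x)]
    ring

lemma termDeriv (c d lam : ℝ) (hc : c ≠ 0) (h : d + lam * c ≠ 0) :
    HasDerivAt (fun l => c * Real.sign (d + l * c) * Real.log |d + l * c| / 2)
      (c ^ 2 / (2 * |d + lam * c|)) lam := by
  have haff : HasDerivAt (fun l : ℝ => d + l * c) c lam := by
    simpa using (hasDerivAt_mul_const c).const_add d
  have hcont : Continuous (fun l : ℝ => d + l * c) := by continuity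
  rcases h.lt_or_gt with hu | hu
  · have hev : ∀ᶠ l in nhds lam, d + l * c < 0 :=
      (isOpen_lt hcont continuous_const).eventually_mem (by simpa using hu)
    have hlog : HasDerivAt (fun l => Real.log (-(d + l * c)))
        ((-(d + lam * c))⁻¹ * (-c)) lam :=
      (Real.hasDerivAt_log (by simpa using (neg_pos.mpr hu).ne')).comp lam haff.neg
    have hg : HasDerivAt (fun l => c * (-1 : ℝ) * Real.log (-(d + l * c)) / 2)
        (c * (-1 : ℝ) * ((-(d + lam * c))⁻¹ * (-c)) / 2) lam :=
      (hlog.const_mul (c * (-1 : ℝ))).div_const 2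
    have heq : (fun l => c * Real.sign (d + l * c) * Real.log |d + l * c| / 2)
        =ᶠ[nhds lam] (fun l => c * (-1 : ℝ) * Real.log (-(d + l * c)) / 2) := by
      filter_upwards [hev] with l hl
      rw [Real.sign_of_neg hl, abs_of_neg hl]
    have := hg.congr_of_eventuallyEq heq
    convert this using 1
    rotate_right
    rw [abs_of_neg hu]
    field_simp
    all_goals rfl
  · have hev : ∀ᶠ l in nhds lam, 0 < d + l * c :=
      (isOpen_lt continuous_const hcont).eventually_mem (by simpa using hu)
    have hlog : HasDerivAt (fun l => Real.log (d + l * c))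
        ((d + lam * c)⁻¹ * c) lam :=
      (Real.hasDerivAt_log (by simpa using h)).comp lam haff
    have hg : HasDerivAt (fun l => c * (1 : ℝ) * Real.log (d + l * c) / 2)
        (c * (1 : ℝ) * ((d + lam * c)⁻¹ * c) / 2) lam :=
      (hlog.const_mul (c * (1 : ℝ))).div_const 2
    have heq : (fun l => c * Real.sign (d + l * c) * Real.log |d + l * c| / 2)
        =ᶠ[nhds lam] (fun l => c * (1 : ℝ) * Real.log (d + l * c) / 2) := by
      filter_upwards [hev] with l hl
      rw [Real.sign_of_pos hl, abs_of_pos hl]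
    have := hg.congr_of_eventuallyEq heq
    convert this using 1
    rotate_right
    rw [abs_of_pos hu]
    field_simp
    all_goals rfl
theorem stmt_13 (m : ℕ) (hm : 1 ≤ m)
    (A : Matrix (Fin m) (Fin (m + 1)) ℝ)
    (b : Fin (m + 1) → ℝ) (hb0 : b ≠ 0)
    (hbker : ∀ j, ∑ i, A j i * b i = 0)
    (hbi : ∀ i, b i ≠ 0)
    (w : Fin m → ℝ) (x₀ : Fin (m + 1) → ℝ)
    (hx₀ : ∀ j, ∑ i, A j i * x₀ i = w j)
    (γ : ℝ → Fin (m + 1) → ℝ)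
    (hγ : ∀ lam i, γ lam i =
      Real.sign (x₀ i + lam * b i) * Real.sqrt |x₀ i + lam * b i|)
    (Φ : (Fin (m + 1) → ℝ) → ℝ)
    (hΦ : ∀ v, Φ v = ∑ i, b i * Real.sign (v i) * Real.log |v i|) :
    (∀ lam : ℝ, (∀ i, x₀ i + lam * b i ≠ 0) →
      HasDerivAt (fun l => Φ (γ l))
        (∑ i, (b i) ^ 2 / (2 * |x₀ i + lam * b i|)) lam ∧
      0 < ∑ i, (b i) ^ 2 / (2 * |x₀ i + lam * b i|)) ∧
    (∀ s t : ℝ, s < t →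
      (∀ lam ∈ Set.Ioo s t, ∀ i, x₀ i + lam * b i ≠ 0) →
      StrictMonoOn (fun l => Φ (γ l)) (Set.Ioo s t)) := by
  have hfun : (fun l => Φ (γ l)) =
      fun l => ∑ i, b i * Real.sign (x₀ i + l * b i) * Real.log |x₀ i + l * b i| / 2 := by
    funext l
    rw [hΦ]
    refine Finset.sum_congr rfl fun i _ => ?_
    rw [hγ]
    exact termEq (b i) (x₀ i + l * b i)
  have key : ∀ lam : ℝ, (∀ i, x₀ i + lam * b i ≠ 0) →
      HasDerivAt (fun l => Φ (γ l))
        (∑ i, (b i) ^ 2 / (2 * |x₀ i + lam * b i|)) lam ∧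
      0 < ∑ i, (b i) ^ 2 / (2 * |x₀ i + lam * b i|) := by
    intro lam h
    constructor
    · rw [hfun]
      exact HasDerivAt.fun_sum fun i _ => termDeriv (b i) (x₀ i) lam (hbi i) (h i)
    · refine Finset.sum_pos (fun i _ => ?_) Finset.univ_nonempty
      have h1 : 0 < (b i) ^ 2 := by
        have := hbi i; positivity
      have h2 : 0 < |x₀ i + lam * b i| := abs_pos.mpr (h i)
      positivity
  refine ⟨key, ?_⟩
  intro s t hst hall
  have hd : ∀ x ∈ Set.Ioo s t, HasDerivAt (fun l => Φ (γ l))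
      (∑ i, (b i) ^ 2 / (2 * |x₀ i + x * b i|)) x :=
    fun x hx => (key x (hall x hx)).1
  refine strictMonoOn_of_deriv_pos (convex_Ioo s t)
    (fun x hx => (hd x hx).continuousAt.continuousWithinAt) ?_
  intro x hx
  rw [interior_Ioo] at hx
  rw [(hd x hx).deriv]
  exact (key x (hall x hx)).2
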